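/- Let T be a densely defined skew-adjoint operator on a Hilbert space L² with Tu = imu on a closed subspace L²_m, and let □ be a nonnegative self-adjoint operator commuting with T on L²_m. Suppose a Gårding-type inequality ‖v‖_{s+2} ≤ C_s m^{N_s}(‖(□ - T²)v‖_s + ‖v‖_s) holds for all v in the range of the kernel projection S of □ restricted to L²_m, where ‖·‖_s are Sobolev norms, with constants independent of m. If T²Sv = -m²Sv and ‖Sv‖ ≤ ‖v‖ for all v ∈ L², then for every s ∈ ℕ₀ there are constants C'_s, N'_s independent of m with ‖Su‖_{2s} ≤ C'_s m^{N'_s} ‖u‖ for all u ∈ L². -/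
import Mathlib


/-- Abstract Gårding/bootstrap estimate.  Given Sobolev-type seminorms
`nrm s`, kernel projections `S m` of operators `B m` commuting with `T m`, with
`T² S = -m² S` on the `m`-th Fourier component, `‖S u‖ ≤ ‖u‖`, and a Gårding
inequality `‖v‖_{s+2} ≤ C m^N (‖(B - T²)v‖_s + ‖v‖_s)` for `v` in the range of `S`
(constants independent of `m`), one obtains, for every `s`, constants `C', N'`
independent of `m` with `‖S u‖_{2s} ≤ C' m^{N'} ‖u‖`. -/
theorem stmt_14 {H : Type*} [NormedAddCommGroup H] [InnerProductSpace ℂ H]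
    (nrm : ℕ → H → ℝ)
    (hnrm0 : ∀ v : H, nrm 0 v = ‖v‖)
    (hnonneg : ∀ (s : ℕ) (v : H), 0 ≤ nrm s v)
    (hadd : ∀ (s : ℕ) (v w : H), nrm s (v + w) ≤ nrm s v + nrm s w)
    (hsmul : ∀ (s : ℕ) (c : ℂ) (v : H), nrm s (c • v) = ‖c‖ * nrm s v)
    (B T S : ℕ → H →ₗ[ℂ] H)
    (hBS : ∀ (m : ℕ) (u : H), B m (S m u) = 0)
    (hT2 : ∀ (m : ℕ) (u : H), T m (T m (S m u)) = (-(m : ℂ) ^ 2) • S m u)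
    (hScontr : ∀ (m : ℕ) (u : H), ‖S m u‖ ≤ ‖u‖)
    (hGarding : ∀ s : ℕ, ∃ C : ℝ, 0 < C ∧ ∃ N : ℕ, ∀ m : ℕ, 1 ≤ m → ∀ u : H,
      nrm (s + 2) (S m u) ≤ C * (m : ℝ) ^ N *
        (nrm s (B m (S m u) - T m (T m (S m u))) + nrm s (S m u))) :
    ∀ s : ℕ, ∃ C : ℝ, 0 < C ∧ ∃ N : ℕ, ∀ m : ℕ, 1 ≤ m → ∀ u : H,
      nrm (2 * s) (S m u) ≤ C * (m : ℝ) ^ N * ‖u‖ := by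
  intro s
  induction s with
  | zero =>
    refine ⟨1, one_pos, 0, fun m hm u => ?_⟩
    simpa [hnrm0] using hScontr m u
  | succ s ih =>
    obtain ⟨C', hC', N', hih⟩ := ih
    obtain ⟨C, hC, N, hG⟩ := hGarding (2 * s)
    refine ⟨2 * C * C', by positivity, N + 2 + N', fun m hm u => ?_⟩
    have key : nrm (2 * s + 2) (S m u) ≤
        C * (m : ℝ) ^ N * ((m : ℝ) ^ 2 + 1) * nrm (2 * s) (S m u) := by
      have h1 := hG m hm u
      have h2 : B m (S m u) - T m (T m (S m u)) = ((m : ℂ) ^ 2) • S m u := by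
        rw [hBS, hT2]; simp
      rw [h2, hsmul] at h1
      have : ‖(m : ℂ) ^ 2‖ = (m : ℝ) ^ 2 := by
        simp [norm_pow]
      rw [this] at h1
      calc nrm (2 * s + 2) (S m u) ≤ C * (m : ℝ) ^ N *
            ((m : ℝ) ^ 2 * nrm (2 * s) (S m u) + nrm (2 * s) (S m u)) := h1
        _ = C * (m : ℝ) ^ N * ((m : ℝ) ^ 2 + 1) * nrm (2 * s) (S m u) := by ring
    have hm1 : (1 : ℝ) ≤ (m : ℝ) := by exact_mod_cast hm
    have hmsq : (m : ℝ) ^ 2 + 1 ≤ 2 * (m : ℝ) ^ 2 := by nlinarith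
    have hnn : 0 ≤ nrm (2 * s) (S m u) := hnonneg _ _
    have h3 : nrm (2 * s) (S m u) ≤ C' * (m : ℝ) ^ N' * ‖u‖ := hih m hm u
    have hmul : 2 * (s + 1) = 2 * s + 2 := by ring
    rw [hmul]
    calc nrm (2 * s + 2) (S m u)
        ≤ C * (m : ℝ) ^ N * ((m : ℝ) ^ 2 + 1) * nrm (2 * s) (S m u) := key
      _ ≤ C * (m : ℝ) ^ N * (2 * (m : ℝ) ^ 2) * (C' * (m : ℝ) ^ N' * ‖u‖) := by
          apply mul_le_mul
          · apply mul_le_mul_of_nonneg_left hmsq; positivity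
          · exact h3
          · exact hnn
          · positivity
      _ = 2 * C * C' * (m : ℝ) ^ (N + 2 + N') * ‖u‖ := by
          rw [pow_add, pow_add]; ring
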